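/- Let P be a finite poset and (x₁, x₂, …, xₙ) any linear extension of P. Then birational antichain rowmotion BAR = τ_{xₙ} ∘ ⋯ ∘ τ_{x₂} ∘ τ_{x₁} equals the composition ∇ ∘ Θ ∘ Δ⁻¹ of the birational transfer maps: for every positive labeling g of P, τ_{xₙ}(⋯(τ_{x₂}(τ_{x₁}(g)))⋯) = ∇(Θ(Δ⁻¹(g))). -/

import Mathlib

/-!
Birational (commutative) antichain/order rowmotion on a finite poset `P`, with labels in `ℝ`
and positive labelings, following Joseph–Roby, "Birational and noncommutative lifts of
antichain toggling and rowmotion".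
-/

open Finset

attribute [local instance] Classical.propDecidable

variable {P : Type*} [Fintype P] [PartialOrder P]

/-- `c` is a saturated chain in `P`: consecutive entries are covers. -/
def SatChain {P : Type*} [PartialOrder P] {k : ℕ} (c : Fin (k + 1) → P) : Prop :=
  ∀ i : Fin k, c i.castSucc ⋖ c i.succ

/-- `c` is a maximal chain of `P`: a saturated chain from a minimal element to a maximal
element of `P` (equivalently, the restriction to `P` of a maximal chain
`0̂ ⋖ y₁ ⋖ ⋯ ⋖ y_k ⋖ 1̂` of `P̂`). -/
def MaxChain {P : Type*} [PartialOrder P] {k : ℕ} (c : Fin (k + 1) → P) : Prop :=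
  SatChain c ∧ IsMin (c 0) ∧ IsMax (c (Fin.last k))

/-- `Υ_v(g)`: the sum over all maximal chains `(y₁, …, y_k)` of `P` through `v` of the
products `g(y₁)⋯g(y_k)` of the labels along the chain. -/
noncomputable def Upsilon (g : P → ℝ) (v : P) : ℝ :=
  ∑ k ∈ range (Fintype.card P),
    ∑ c ∈ univ.filter (fun c : Fin (k + 1) → P => MaxChain c ∧ ∃ j, c j = v),
      (List.ofFn (g ∘ c)).prod

/-- The birational antichain toggle `τ_v`: it replaces the label at `v` by `C / Υ_v(g)` and
fixes all other labels. -/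
noncomputable def atog (C : ℝ) (v : P) (g : P → ℝ) : P → ℝ :=
  fun x => if x = v then C / Upsilon g v else g x

/-- `∑_{y ∈ P̂, y ⋖ x} f(y)`, with the convention `f(0̂) = 1` (the unique lower cover in
`P̂` of a minimal element of `P` is `0̂`). -/
noncomputable def lowSum (f : P → ℝ) (x : P) : ℝ :=
  (if IsMin x then 1 else 0) + ∑ y ∈ univ.filter (fun y => y ⋖ x), f y

/-- `∑_{y ∈ P̂, y ⋗ x} 1/f(y)`, with the convention `f(1̂) = C`. -/
noncomputable def upInvSum (C : ℝ) (f : P → ℝ) (x : P) : ℝ :=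
  (if IsMax x then 1 / C else 0) + ∑ y ∈ univ.filter (fun y => x ⋖ y), 1 / f y

/-- The birational order toggle `T_v`: it replaces the label at `v` by
`(∑_{y ∈ P̂, y ⋖ v} f(y)) / (f(v) · ∑_{y ∈ P̂, y ⋗ v} 1/f(y))` (with `f(0̂) = 1`,
`f(1̂) = C`) and fixes all other labels. -/
noncomputable def otog (C : ℝ) (v : P) (f : P → ℝ) : P → ℝ :=
  fun x => if x = v then lowSum f v / (f v * upInvSum C f v) else f x

/-- The birational complement map `Θ`: `(Θf)(x) = C / f(x)`. -/
noncomputable def thetaMap (C : ℝ) (f : P → ℝ) : P → ℝ := fun x => C / f x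

/-- The birational down transfer `∇`: `(∇f)(x) = f(x) / ∑_{y ∈ P̂, y ⋖ x} f(y)` with
`f(0̂) = 1`. -/
noncomputable def nablaMap (f : P → ℝ) : P → ℝ := fun x => f x / lowSum f x

/-- The birational inverse up transfer `Δ⁻¹`: `(Δ⁻¹f)(x)` is the sum, over all saturated
chains `x = y₁ ⋖ y₂ ⋖ ⋯ ⋖ y_k ⋖ 1̂` in `P̂` (i.e. saturated chains of `P` starting at `x`
and ending at a maximal element of `P`), of `f(y₁)f(y₂)⋯f(y_k)`. -/
noncomputable def deltaInvMap (f : P → ℝ) : P → ℝ := fun x =>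
  ∑ k ∈ range (Fintype.card P),
    ∑ c ∈ univ.filter (fun c : Fin (k + 1) → P =>
        SatChain c ∧ c 0 = x ∧ IsMax (c (Fin.last k))),
      (List.ofFn (f ∘ c)).prod

/-- `l` is a linear extension of `P`: it lists every element of `P` exactly once, and
`l[i] < l[j]` in `P` implies `i < j`. -/
def IsLinearExtension {P : Type*} [PartialOrder P] (l : List P) : Prop :=
  l.Nodup ∧ (∀ x : P, x ∈ l) ∧
    ∀ (i j : ℕ) (hi : i < l.length) (hj : j < l.length), l[i]'hi < l[j]'hj → i < j

/-- `l` is a linear extension of the subposet `A` of `P`. -/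
def IsLinearExtensionOn {P : Type*} [PartialOrder P] (A : Set P) (l : List P) : Prop :=
  l.Nodup ∧ (∀ x : P, x ∈ l ↔ x ∈ A) ∧
    ∀ (i j : ℕ) (hi : i < l.length) (hj : j < l.length), l[i]'hi < l[j]'hj → i < j

/-- Apply the antichain toggles `τ` along the list `l`, first element of `l` first; for a
linear extension `l = (x₁,…,xₙ)` this is `τ_{xₙ} ∘ ⋯ ∘ τ_{x₂} ∘ τ_{x₁}`, i.e. birational
antichain rowmotion `BAR`. -/
noncomputable def applyATogs (C : ℝ) (l : List P) (g : P → ℝ) : P → ℝ :=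
  l.foldl (fun h v => atog C v h) g

/-- Apply the order toggles `T` along the list `l`, first element of `l` first. -/
noncomputable def applyOTogs (C : ℝ) (l : List P) (f : P → ℝ) : P → ℝ :=
  l.foldl (fun h v => otog C v h) f

/-- `rk` is a rank function exhibiting `P` as a graded poset of rank `r`: minimal elements
have rank `0`, ranks increase by `1` along covers, and maximal elements have rank `r`. -/
def IsRankFunction {P : Type*} [PartialOrder P] (rk : P → ℕ) (r : ℕ) : Prop :=
  (∀ x : P, IsMin x → rk x = 0) ∧ (∀ x y : P, x ⋖ y → rk y = rk x + 1) ∧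
    (∀ x : P, IsMax x → rk x = r)
namespace BARAux
set_option linter.unusedSectionVars false

lemma satChain_strictMono {k : ℕ} {c : Fin (k + 1) → P} (h : SatChain c) : StrictMono c :=
  Fin.strictMono_iff_lt_succ.2 fun i => (h i).lt

lemma satChain_length_le {k : ℕ} {c : Fin (k + 1) → P} (h : SatChain c) :
    k + 1 ≤ Fintype.card P := by
  simpa using Fintype.card_le_of_injective c (satChain_strictMono h).injective

lemma satChain_cons {k : ℕ} {x : P} {c : Fin (k + 1) → P} (hx : x ⋖ c 0) (h : SatChain c) :
    SatChain (Fin.cases x c : Fin (k + 1 + 1) → P) := by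
  intro i
  induction i using Fin.cases with
  | zero => exact hx
  | succ j => simpa [← Fin.succ_castSucc] using h j

lemma satChain_tail {k : ℕ} {c : Fin (k + 1 + 1) → P} (h : SatChain c) :
    SatChain (fun i : Fin (k + 1) => c i.succ) := by
  intro i
  exact h i.succ

lemma satChain_init {k : ℕ} {c : Fin (k + 1 + 1) → P} (h : SatChain c) :
    SatChain (fun i : Fin (k + 1) => c i.castSucc) := by
  intro i
  exact h i.castSucc

lemma satChain_snoc {k : ℕ} {x : P} {c : Fin (k + 1) → P} (hx : c (Fin.last k) ⋖ x)
    (h : SatChain c) : SatChain (Fin.snoc c x : Fin (k + 1 + 1) → P) := by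
  intro i
  induction i using Fin.lastCases with
  | last => simpa [Fin.succ_last, Fin.snoc_castSucc, Fin.snoc_last] using hx
  | cast j =>
    rw [Fin.succ_castSucc]
    simp only [Fin.snoc_castSucc]
    exact h j

end BARAux
namespace BARAux

lemma chain_from_cover_empty {k : ℕ} (hk : Fintype.card P ≤ k + 1) {x y : P} (hxy : x ⋖ y)
    (R : (Fin (k + 1) → P) → Prop) :
    univ.filter (fun c : Fin (k + 1) → P => SatChain c ∧ c 0 = y ∧ R c) = ∅ := by
  ext c
  simp only [mem_filter, mem_univ, true_and, Finset.notMem_empty, iff_false]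
  rintro ⟨hc, hc0, -⟩
  have hx0 : x ⋖ c 0 := hc0 ▸ hxy
  have := satChain_length_le (satChain_cons hx0 hc)
  omega

lemma chain_to_cover_empty {k : ℕ} (hk : Fintype.card P ≤ k + 1) {x y : P} (hxy : y ⋖ x)
    (R : (Fin (k + 1) → P) → Prop) :
    univ.filter (fun c : Fin (k + 1) → P => SatChain c ∧ c (Fin.last k) = y ∧ R c) = ∅ := by
  ext c
  simp only [mem_filter, mem_univ, true_and, Finset.notMem_empty, iff_false]
  rintro ⟨hc, hcl, -⟩
  have hx0 : c (Fin.last k) ⋖ x := hcl ▸ hxy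
  have := satChain_length_le (satChain_snoc hx0 hc)
  omega

lemma head_step (f : P → ℝ) (x : P) (Q : ∀ k : ℕ, (Fin (k + 1) → P) → Prop)
    (hQ : ∀ (k : ℕ) (c : Fin (k + 1 + 1) → P), c 0 = x → SatChain c →
      (Q (k + 1) c ↔ Q k (fun i => c i.succ))) (k : ℕ) :
    ∑ c ∈ univ.filter (fun c : Fin (k + 1 + 1) → P => SatChain c ∧ c 0 = x ∧ Q (k + 1) c),
        (List.ofFn (f ∘ c)).prod
    = f x * ∑ y ∈ univ.filter (fun y => x ⋖ y),
        ∑ c ∈ univ.filter (fun c : Fin (k + 1) → P => SatChain c ∧ c 0 = y ∧ Q k c),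
          (List.ofFn (f ∘ c)).prod := by
  rw [Finset.mul_sum]
  simp only [Finset.mul_sum]
  rw [Finset.sum_sigma' (univ.filter (fun y : P => x ⋖ y))
    (fun y => univ.filter (fun c : Fin (k + 1) → P => SatChain c ∧ c 0 = y ∧ Q k c))
    (fun _ c => f x * (List.ofFn (f ∘ c)).prod)]
  refine Finset.sum_nbij' (fun c => ⟨c 1, fun i => c i.succ⟩)
    (fun p => (Fin.cases x p.2 : Fin (k + 1 + 1) → P)) ?_ ?_ ?_ ?_ ?_
  · rintro c hc
    rw [Finset.mem_filter] at hc
    obtain ⟨-, hsc, hc0, hq⟩ := hc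
    have hcov : x ⋖ c 1 := by
      have := hsc 0
      simpa [hc0] using this
    rw [Finset.mem_sigma]
    refine ⟨by simpa using hcov, ?_⟩
    rw [Finset.mem_filter]
    refine ⟨mem_univ _, satChain_tail hsc, by simp, (hQ k c hc0 hsc).1 hq⟩
  · rintro ⟨y, c⟩ hp
    simp only [Finset.mem_sigma, Finset.mem_filter, Finset.mem_univ, true_and] at hp
    obtain ⟨hy, hsc, hc0, hq⟩ := hp
    have hcov : x ⋖ c 0 := hc0 ▸ hy
    have hsc' : SatChain (Fin.cases x c : Fin (k + 1 + 1) → P) := satChain_cons hcov hsc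
    simp only [Finset.mem_filter, Finset.mem_univ, true_and]
    exact ⟨hsc', by simp, (hQ k _ (by simp) hsc').2 (by simpa using hq)⟩
  · intro c hc
    rw [Finset.mem_filter] at hc
    funext i
    induction i using Fin.cases with
    | zero => simpa using hc.2.2.1.symm
    | succ j => simp
  · rintro ⟨y, c⟩ hp
    simp only [Finset.mem_sigma, Finset.mem_filter, Finset.mem_univ, true_and] at hp
    obtain ⟨-, -, hc0, -⟩ := hp
    refine Sigma.ext (by exact hc0) (heq_of_eq ?_)
    funext i; simp
  · intro c hc
    rw [List.ofFn_succ, List.prod_cons]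
    rw [Finset.mem_filter] at hc
    simp [hc.2.2.1]

end BARAux
namespace BARAux

lemma head_rec (f : P → ℝ) (x : P) (Q : ∀ k : ℕ, (Fin (k + 1) → P) → Prop)
    (hQ : ∀ (k : ℕ) (c : Fin (k + 1 + 1) → P), c 0 = x → SatChain c →
      (Q (k + 1) c ↔ Q k (fun i => c i.succ))) :
    ∑ k ∈ range (Fintype.card P),
        ∑ c ∈ univ.filter (fun c : Fin (k + 1) → P => SatChain c ∧ c 0 = x ∧ Q k c),
          (List.ofFn (f ∘ c)).prod
    = (if Q 0 (fun _ => x) then f x else 0)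
      + f x * ∑ y ∈ univ.filter (fun y => x ⋖ y),
          ∑ k ∈ range (Fintype.card P),
            ∑ c ∈ univ.filter (fun c : Fin (k + 1) → P => SatChain c ∧ c 0 = y ∧ Q k c),
              (List.ofFn (f ∘ c)).prod := by
  have hcard : 0 < Fintype.card P := Fintype.card_pos_iff.2 ⟨x⟩
  obtain ⟨n, hn⟩ : ∃ n, Fintype.card P = n + 1 := ⟨_, (Nat.succ_pred_eq_of_pos hcard).symm⟩
  rw [hn, Finset.sum_range_succ']
  have hT0 : ∑ c ∈ univ.filter (fun c : Fin 1 → P => SatChain c ∧ c 0 = x ∧ Q 0 c),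
      (List.ofFn (f ∘ c)).prod = if Q 0 (fun _ => x) then f x else 0 := by
    have hset : univ.filter (fun c : Fin 1 → P => SatChain c ∧ c 0 = x ∧ Q 0 c)
        = if Q 0 (fun _ => x) then {fun _ => x} else ∅ := by
      split_ifs with hq
      · ext c
        simp only [Finset.mem_filter, Finset.mem_univ, true_and, Finset.mem_singleton]
        constructor
        · rintro ⟨-, hc0, -⟩
          funext i
          rw [Subsingleton.elim i 0, hc0]
        · rintro rfl
          exact ⟨fun i => i.elim0, rfl, hq⟩
      · ext c
        simp only [Finset.mem_filter, Finset.mem_univ, true_and, Finset.notMem_empty,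
          iff_false]
        rintro ⟨-, hc0, hQc⟩
        have : c = fun _ => x := funext fun i => by rw [Subsingleton.elim i 0, hc0]
        exact hq (this ▸ hQc)
    rw [hset]
    split_ifs
    · simp [List.ofFn_succ]
    · simp
  rw [hT0]
  have hsteps : ∀ k ∈ range n,
      (∑ c ∈ univ.filter (fun c : Fin (k + 1 + 1) → P => SatChain c ∧ c 0 = x ∧ Q (k + 1) c),
        (List.ofFn (f ∘ c)).prod)
      = f x * ∑ y ∈ univ.filter (fun y => x ⋖ y),
          ∑ c ∈ univ.filter (fun c : Fin (k + 1) → P => SatChain c ∧ c 0 = y ∧ Q k c),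
            (List.ofFn (f ∘ c)).prod := fun k _ => head_step f x Q hQ k
  rw [Finset.sum_congr rfl hsteps, ← Finset.mul_sum, Finset.sum_comm]
  have hlast : ∀ y ∈ univ.filter (fun y => x ⋖ y),
      ∑ k ∈ range (n + 1),
        ∑ c ∈ univ.filter (fun c : Fin (k + 1) → P => SatChain c ∧ c 0 = y ∧ Q k c),
          (List.ofFn (f ∘ c)).prod
      = ∑ k ∈ range n,
        ∑ c ∈ univ.filter (fun c : Fin (k + 1) → P => SatChain c ∧ c 0 = y ∧ Q k c),
          (List.ofFn (f ∘ c)).prod := by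
    intro y hy
    rw [Finset.sum_range_succ, chain_from_cover_empty (le_of_eq hn)
      (by simpa using hy) (Q n), Finset.sum_empty, add_zero]
  rw [Finset.sum_congr rfl hlast]
  ring

end BARAux
namespace BARAux

lemma tail_step (f : P → ℝ) (x : P) (Q : ∀ k : ℕ, (Fin (k + 1) → P) → Prop)
    (hQ : ∀ (k : ℕ) (c : Fin (k + 1 + 1) → P), c (Fin.last (k + 1)) = x → SatChain c →
      (Q (k + 1) c ↔ Q k (fun i => c i.castSucc))) (k : ℕ) :
    ∑ c ∈ univ.filter (fun c : Fin (k + 1 + 1) → P =>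
        SatChain c ∧ c (Fin.last (k + 1)) = x ∧ Q (k + 1) c),
        (List.ofFn (f ∘ c)).prod
    = (∑ y ∈ univ.filter (fun y => y ⋖ x),
        ∑ c ∈ univ.filter (fun c : Fin (k + 1) → P => SatChain c ∧ c (Fin.last k) = y ∧ Q k c),
          (List.ofFn (f ∘ c)).prod) * f x := by
  rw [Finset.sum_mul]
  simp only [Finset.sum_mul]
  rw [Finset.sum_sigma' (univ.filter (fun y : P => y ⋖ x))
    (fun y => univ.filter (fun c : Fin (k + 1) → P => SatChain c ∧ c (Fin.last k) = y ∧ Q k c))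
    (fun _ c => (List.ofFn (f ∘ c)).prod * f x)]
  refine Finset.sum_nbij' (fun c => ⟨c (Fin.last k).castSucc, fun i => c i.castSucc⟩)
    (fun p => (Fin.snoc p.2 x : Fin (k + 1 + 1) → P)) ?_ ?_ ?_ ?_ ?_
  · rintro c hc
    simp only [Finset.mem_filter, Finset.mem_univ, true_and] at hc
    obtain ⟨hsc, hcl, hq⟩ := hc
    have hcov : c (Fin.last k).castSucc ⋖ x := by
      have := hsc (Fin.last k)
      rwa [Fin.succ_last, hcl] at this
    rw [Finset.mem_sigma]
    exact ⟨by simpa using hcov, Finset.mem_filter.2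
      ⟨mem_univ _, satChain_init hsc, rfl, (hQ k c hcl hsc).1 hq⟩⟩
  · rintro ⟨y, c⟩ hp
    simp only [Finset.mem_sigma, Finset.mem_filter, Finset.mem_univ, true_and] at hp
    obtain ⟨hy, hsc, hcl, hq⟩ := hp
    have hcov : c (Fin.last k) ⋖ x := hcl ▸ hy
    have hsc' : SatChain (Fin.snoc c x : Fin (k + 1 + 1) → P) := satChain_snoc hcov hsc
    simp only [Finset.mem_filter, Finset.mem_univ, true_and]
    refine ⟨hsc', by simp, (hQ k _ (by simp) hsc').2 ?_⟩
    simpa [Fin.snoc_castSucc] using hq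
  · intro c hc
    simp only [Finset.mem_filter, Finset.mem_univ, true_and] at hc
    funext i
    induction i using Fin.lastCases with
    | last => simpa [Fin.snoc_last] using hc.2.1.symm
    | cast j => simp [Fin.snoc_castSucc]
  · rintro ⟨y, c⟩ hp
    simp only [Finset.mem_sigma, Finset.mem_filter, Finset.mem_univ, true_and] at hp
    obtain ⟨-, -, hcl, -⟩ := hp
    refine Sigma.ext (by simpa [Fin.snoc_castSucc] using hcl) (heq_of_eq ?_)
    funext i; simp [Fin.snoc_castSucc]
  · intro c hc
    simp only [Finset.mem_filter, Finset.mem_univ, true_and] at hc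
    rw [List.ofFn_succ', List.concat_eq_append, List.prod_append]
    simp [hc.2.1]

lemma tail_rec (f : P → ℝ) (x : P) (Q : ∀ k : ℕ, (Fin (k + 1) → P) → Prop)
    (hQ : ∀ (k : ℕ) (c : Fin (k + 1 + 1) → P), c (Fin.last (k + 1)) = x → SatChain c →
      (Q (k + 1) c ↔ Q k (fun i => c i.castSucc))) :
    ∑ k ∈ range (Fintype.card P),
        ∑ c ∈ univ.filter (fun c : Fin (k + 1) → P => SatChain c ∧ c (Fin.last k) = x ∧ Q k c),
          (List.ofFn (f ∘ c)).prod
    = (if Q 0 (fun _ => x) then f x else 0)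
      + (∑ y ∈ univ.filter (fun y => y ⋖ x),
          ∑ k ∈ range (Fintype.card P),
            ∑ c ∈ univ.filter (fun c : Fin (k + 1) → P => SatChain c ∧ c (Fin.last k) = y ∧ Q k c),
              (List.ofFn (f ∘ c)).prod) * f x := by
  have hcard : 0 < Fintype.card P := Fintype.card_pos_iff.2 ⟨x⟩
  obtain ⟨n, hn⟩ : ∃ n, Fintype.card P = n + 1 := ⟨_, (Nat.succ_pred_eq_of_pos hcard).symm⟩
  rw [hn, Finset.sum_range_succ']
  have hT0 : ∑ c ∈ univ.filter (fun c : Fin 1 → P => SatChain c ∧ c (Fin.last 0) = x ∧ Q 0 c),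
      (List.ofFn (f ∘ c)).prod = if Q 0 (fun _ => x) then f x else 0 := by
    have hset : univ.filter (fun c : Fin 1 → P => SatChain c ∧ c (Fin.last 0) = x ∧ Q 0 c)
        = if Q 0 (fun _ => x) then {fun _ => x} else ∅ := by
      split_ifs with hq
      · ext c
        simp only [Finset.mem_filter, Finset.mem_univ, true_and, Finset.mem_singleton]
        constructor
        · rintro ⟨-, hc0, -⟩
          funext i
          rw [Subsingleton.elim i (Fin.last 0), hc0]
        · rintro rfl
          exact ⟨fun i => i.elim0, rfl, hq⟩
      · ext c
        simp only [Finset.mem_filter, Finset.mem_univ, true_and, Finset.notMem_empty,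
          iff_false]
        rintro ⟨-, hc0, hQc⟩
        have : c = fun _ => x := funext fun i => by rw [Subsingleton.elim i (Fin.last 0), hc0]
        exact hq (this ▸ hQc)
    rw [hset]
    split_ifs
    · simp [List.ofFn_succ]
    · simp
  rw [hT0]
  have hsteps : ∀ k ∈ range n,
      (∑ c ∈ univ.filter (fun c : Fin (k + 1 + 1) → P =>
          SatChain c ∧ c (Fin.last (k + 1)) = x ∧ Q (k + 1) c),
        (List.ofFn (f ∘ c)).prod)
      = (∑ y ∈ univ.filter (fun y => y ⋖ x),
          ∑ c ∈ univ.filter (fun c : Fin (k + 1) → P => SatChain c ∧ c (Fin.last k) = y ∧ Q k c),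
            (List.ofFn (f ∘ c)).prod) * f x := fun k _ => tail_step f x Q hQ k
  rw [Finset.sum_congr rfl hsteps, ← Finset.sum_mul, Finset.sum_comm]
  have hlast : ∀ y ∈ univ.filter (fun y => y ⋖ x),
      ∑ k ∈ range (n + 1),
        ∑ c ∈ univ.filter (fun c : Fin (k + 1) → P => SatChain c ∧ c (Fin.last k) = y ∧ Q k c),
          (List.ofFn (f ∘ c)).prod
      = ∑ k ∈ range n,
        ∑ c ∈ univ.filter (fun c : Fin (k + 1) → P => SatChain c ∧ c (Fin.last k) = y ∧ Q k c),
          (List.ofFn (f ∘ c)).prod := by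
    intro y hy
    rw [Finset.sum_range_succ, chain_to_cover_empty (le_of_eq hn)
      (by simpa using hy) (Q n), Finset.sum_empty, add_zero]
  rw [Finset.sum_congr rfl hlast]
  ring

end BARAux
namespace BARAux

/-- Sum over saturated chains from `x` to a maximal element that pass through `v`. -/
noncomputable def upsAt (f : P → ℝ) (x v : P) : ℝ :=
  ∑ k ∈ range (Fintype.card P),
    ∑ c ∈ univ.filter (fun c : Fin (k + 1) → P =>
        SatChain c ∧ c 0 = x ∧ (IsMax (c (Fin.last k)) ∧ ∃ j, c j = v)),
      (List.ofFn (f ∘ c)).prod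

/-- Sum over saturated chains from `x` ending exactly at `v`. -/
noncomputable def dAt (f : P → ℝ) (x v : P) : ℝ :=
  ∑ k ∈ range (Fintype.card P),
    ∑ c ∈ univ.filter (fun c : Fin (k + 1) → P =>
        SatChain c ∧ c 0 = x ∧ c (Fin.last k) = v),
      (List.ofFn (f ∘ c)).prod

/-- Sum over saturated chains from a minimal element ending exactly at `v`. -/
noncomputable def dSum (f : P → ℝ) (v : P) : ℝ :=
  ∑ k ∈ range (Fintype.card P),
    ∑ c ∈ univ.filter (fun c : Fin (k + 1) → P =>
        SatChain c ∧ c (Fin.last k) = v ∧ IsMin (c 0)),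
      (List.ofFn (f ∘ c)).prod

lemma filter_inst_eq {α : Type*} {p : α → Prop} (i1 i2 : DecidablePred p) (s : Finset α) :
    @Finset.filter α p i1 s = @Finset.filter α p i2 s := by
  have : i1 = i2 := funext fun a => Subsingleton.elim _ _
  rw [this]

lemma deltaInvMap_rec (f : P → ℝ) (x : P) :
    deltaInvMap f x
      = (if IsMax x then f x else 0)
        + f x * ∑ y ∈ univ.filter (fun y => x ⋖ y), deltaInvMap f y := by
  have h := head_rec f x (fun k c => IsMax (c (Fin.last k)))
    (by intro k c h0 hsc; simp [Fin.succ_last])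
  simpa [deltaInvMap] using h

lemma dAt_rec (f : P → ℝ) (x v : P) :
    dAt f x v
      = (if x = v then f x else 0)
        + f x * ∑ y ∈ univ.filter (fun y => x ⋖ y), dAt f y v := by
  have h := head_rec f x (fun k c => c (Fin.last k) = v)
    (by intro k c h0 hsc; simp [Fin.succ_last])
  simpa [dAt] using h

lemma upsAt_rec (f : P → ℝ) {x v : P} (hxv : x ≠ v) :
    upsAt f x v = f x * ∑ y ∈ univ.filter (fun y => x ⋖ y), upsAt f y v := by
  have h := head_rec f x (fun k c => IsMax (c (Fin.last k)) ∧ ∃ j, c j = v) ?_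
  · have h0 : ¬ (IsMax (((fun _ => x) : Fin 1 → P) (Fin.last 0))
        ∧ ∃ j : Fin 1, ((fun _ => x) : Fin 1 → P) j = v) := by
      rintro ⟨-, j, hj⟩
      exact hxv hj
    rw [if_neg h0, zero_add] at h
    rw [upsAt]
    refine Eq.trans (Finset.sum_congr rfl fun k _ =>
      Finset.sum_congr (filter_inst_eq _ _ _) fun _ _ => rfl) (h.trans ?_)
    exact congrArg _ (Finset.sum_congr rfl fun y _ => Finset.sum_congr rfl fun k _ =>
      Finset.sum_congr (filter_inst_eq _ _ _) fun _ _ => rfl)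
  · intro k c h0 hsc
    constructor
    · rintro ⟨hmax, j, hj⟩
      refine ⟨by simpa [Fin.succ_last] using hmax, ?_⟩
      induction j using Fin.cases with
      | zero => exact absurd (h0 ▸ hj) hxv
      | succ i => exact ⟨i, hj⟩
    · rintro ⟨hmax, j, hj⟩
      exact ⟨by simpa [Fin.succ_last] using hmax, ⟨j.succ, hj⟩⟩

lemma dSum_rec (f : P → ℝ) (v : P) :
    dSum f v
      = (if IsMin v then f v else 0)
        + (∑ y ∈ univ.filter (fun y => y ⋖ v), dSum f y) * f v := by
  have h := tail_rec f v (fun k c => IsMin (c 0))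
    (by intro k c hl hsc; simp [Fin.castSucc_zero])
  simpa [dSum] using h

lemma upsAt_self (f : P → ℝ) (v : P) : upsAt f v v = deltaInvMap f v := by
  rw [upsAt, deltaInvMap]
  refine Finset.sum_congr rfl fun k _ => Finset.sum_congr ?_ fun _ _ => rfl
  ext c
  simp only [Finset.mem_filter, Finset.mem_univ, true_and]
  constructor
  · rintro ⟨hsc, hc0, hmax, -⟩
    exact ⟨hsc, hc0, hmax⟩
  · rintro ⟨hsc, hc0, hmax⟩
    exact ⟨hsc, hc0, hmax, 0, hc0⟩

lemma dAt_eq_zero (f : P → ℝ) {x v : P} (h : ¬ x ≤ v) : dAt f x v = 0 := by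
  rw [dAt]
  refine Finset.sum_eq_zero fun k _ => Finset.sum_eq_zero fun c hc => ?_
  rw [Finset.mem_filter] at hc
  obtain ⟨-, hsc, hc0, hcl⟩ := hc
  exact absurd (hc0 ▸ hcl ▸ (satChain_strictMono hsc).monotone (Fin.zero_le _)) h

lemma upsAt_mul (f : P → ℝ) (v : P) : ∀ x : P,
    upsAt f x v * f v = dAt f x v * deltaInvMap f v := by
  intro x
  induction x using IsWellFounded.induction (· > · : P → P → Prop) with
  | _ x IH =>
    by_cases hxv : x = v
    · subst hxv
      have hd : dAt f x x = f x := by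
        rw [dAt_rec, if_pos rfl]
        have : ∑ y ∈ univ.filter (fun y => x ⋖ y), dAt f y x = 0 :=
          Finset.sum_eq_zero fun y hy => dAt_eq_zero f
            (by simp only [Finset.mem_filter] at hy; exact fun hle => hy.2.lt.not_ge hle)
        rw [this, mul_zero, add_zero]
      rw [upsAt_self, hd]
      ring
    · rw [upsAt_rec f hxv, dAt_rec, if_neg hxv, zero_add]
      rw [mul_assoc, mul_assoc]
      congr 1
      rw [Finset.sum_mul, Finset.sum_mul]
      refine Finset.sum_congr rfl fun y hy => ?_
      simp only [Finset.mem_filter] at hy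
      exact IH y hy.2.lt

end BARAux
namespace BARAux

lemma upsilon_eq (f : P → ℝ) (v : P) :
    Upsilon f v = ∑ x ∈ univ.filter (fun x : P => IsMin x), upsAt f x v := by
  rw [Upsilon]
  simp only [upsAt]
  rw [Finset.sum_comm]
  refine Finset.sum_congr rfl fun k _ => ?_
  rw [← Finset.sum_fiberwise
    (univ.filter (fun c : Fin (k + 1) → P => MaxChain c ∧ ∃ j, c j = v))
    (fun c => c 0) (fun c => (List.ofFn (f ∘ c)).prod)]
  rw [Finset.sum_filter]
  refine Finset.sum_congr rfl fun x _ => ?_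
  by_cases hx : IsMin x
  · rw [if_pos hx]
    refine Finset.sum_congr ?_ fun _ _ => rfl
    ext c
    simp only [Finset.mem_filter, Finset.mem_univ, true_and]
    simp only [MaxChain]
    constructor
    · rintro ⟨⟨⟨hsc, -, hmax⟩, hj⟩, hc0⟩
      exact ⟨hsc, hc0, hmax, hj⟩
    · rintro ⟨hsc, hc0, hmax, hj⟩
      exact ⟨⟨⟨hsc, hc0 ▸ hx, hmax⟩, hj⟩, hc0⟩
  · rw [if_neg hx]
    refine Finset.sum_eq_zero fun c hc => ?_
    simp only [Finset.mem_filter, Finset.mem_univ, true_and] at hc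
    simp only [MaxChain] at hc
    exact absurd (hc.2 ▸ hc.1.1.2.1 : IsMin x) hx

lemma dSum_eq (f : P → ℝ) (v : P) :
    dSum f v = ∑ x ∈ univ.filter (fun x : P => IsMin x), dAt f x v := by
  rw [dSum]
  simp only [dAt]
  rw [Finset.sum_comm]
  refine Finset.sum_congr rfl fun k _ => ?_
  rw [← Finset.sum_fiberwise
    (univ.filter (fun c : Fin (k + 1) → P => SatChain c ∧ c (Fin.last k) = v ∧ IsMin (c 0)))
    (fun c => c 0) (fun c => (List.ofFn (f ∘ c)).prod)]
  rw [Finset.sum_filter]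
  refine Finset.sum_congr rfl fun x _ => ?_
  by_cases hx : IsMin x
  · rw [if_pos hx]
    refine Finset.sum_congr ?_ fun _ _ => rfl
    ext c
    simp only [Finset.mem_filter, Finset.mem_univ, true_and]
    constructor
    · rintro ⟨⟨hsc, hl, -⟩, hc0⟩
      exact ⟨hsc, hc0, hl⟩
    · rintro ⟨hsc, hc0, hl⟩
      exact ⟨⟨hsc, hl, hc0 ▸ hx⟩, hc0⟩
  · rw [if_neg hx]
    refine Finset.sum_eq_zero fun c hc => ?_
    simp only [Finset.mem_filter, Finset.mem_univ, true_and] at hc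
    exact absurd (hc.2 ▸ hc.1.2.2 : IsMin x) hx

lemma deltaInvMap_congr {f g : P → ℝ} {x : P} (h : ∀ w, x ≤ w → f w = g w) :
    deltaInvMap f x = deltaInvMap g x := by
  rw [deltaInvMap, deltaInvMap]
  refine Finset.sum_congr rfl fun k _ => Finset.sum_congr rfl fun c hc => ?_
  simp only [Finset.mem_filter, Finset.mem_univ, true_and] at hc
  obtain ⟨hsc, hc0, -⟩ := hc
  have : f ∘ c = g ∘ c := funext fun i =>
    h (c i) (hc0 ▸ (satChain_strictMono hsc).monotone (Fin.zero_le i))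
  rw [this]

lemma exists_lower_cover {x : P} (h : ¬ IsMin x) : ∃ y, y ⋖ x := by
  obtain ⟨w, hw⟩ := not_isMin_iff.1 h
  obtain ⟨z, -, hz⟩ := exists_le_covBy_of_lt hw
  exact ⟨z, hz⟩

lemma exists_upper_cover {x : P} (h : ¬ IsMax x) : ∃ y, x ⋖ y := by
  obtain ⟨w, hw⟩ := not_isMax_iff.1 h
  obtain ⟨z, hz, -⟩ := exists_covBy_le_of_lt hw
  exact ⟨z, hz⟩

lemma deltaInvMap_pos {g : P → ℝ} (hg : ∀ x, 0 < g x) : ∀ x : P, 0 < deltaInvMap g x := by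
  intro x
  induction x using IsWellFounded.induction (· > · : P → P → Prop) with
  | _ x IH =>
    rw [deltaInvMap_rec]
    have hsum_nonneg : 0 ≤ ∑ y ∈ univ.filter (fun y => x ⋖ y), deltaInvMap g y :=
      Finset.sum_nonneg fun y hy => le_of_lt (IH y (by
        simp only [Finset.mem_filter] at hy; exact hy.2.lt))
    by_cases hx : IsMax x
    · rw [if_pos hx]
      have := mul_nonneg (le_of_lt (hg x)) hsum_nonneg
      linarith [hg x]
    · rw [if_neg hx, zero_add]
      refine mul_pos (hg x) ?_
      obtain ⟨y, hy⟩ := exists_upper_cover hx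
      refine Finset.sum_pos' (fun z hz => le_of_lt (IH z (by
        simp only [Finset.mem_filter] at hz; exact hz.2.lt))) ?_
      exact ⟨y, by simpa using hy, IH y hy.lt⟩

lemma lowSum_theta_pos {C : ℝ} (hC : 0 < C) {g : P → ℝ} (hg : ∀ x, 0 < g x) (x : P) :
    0 < lowSum (thetaMap C (deltaInvMap g)) x := by
  rw [lowSum]
  have hterm : ∀ y, 0 < thetaMap C (deltaInvMap g) y := fun y =>
    div_pos hC (deltaInvMap_pos hg y)
  have hsum_nonneg : 0 ≤ ∑ y ∈ univ.filter (fun y => y ⋖ x), thetaMap C (deltaInvMap g) y :=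
    Finset.sum_nonneg fun y _ => le_of_lt (hterm y)
  by_cases hx : IsMin x
  · rw [if_pos hx]; linarith
  · rw [if_neg hx, zero_add]
    obtain ⟨y, hy⟩ := exists_lower_cover hx
    exact Finset.sum_pos' (fun z _ => le_of_lt (hterm z)) ⟨y, by simpa using hy, hterm y⟩

end BARAux
namespace BARAux

lemma linext_mem_left {l₁ l₂ : List P} {v : P} (hl : IsLinearExtension (l₁ ++ v :: l₂))
    {w : P} (hw : w < v) : w ∈ l₁ := by
  obtain ⟨hnd, hmem, hord⟩ := hl
  obtain ⟨j, hj, hjw⟩ := List.mem_iff_getElem.1 (hmem w)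
  have hlen : l₁.length < (l₁ ++ v :: l₂).length := by simp
  have hv : (l₁ ++ v :: l₂)[l₁.length]'hlen = v := by
    rw [List.getElem_append_right (le_refl l₁.length)]
    simp
  have hjlt : j < l₁.length := by
    refine hord j l₁.length hj hlen ?_
    rw [hjw, hv]
    exact hw
  have heq : (l₁ ++ v :: l₂)[j]'hj = l₁[j]'hjlt := List.getElem_append_left hjlt
  rw [heq] at hjw
  exact hjw ▸ List.getElem_mem hjlt

lemma linext_not_mem_right {l₁ l₂ : List P} {v : P} (hl : IsLinearExtension (l₁ ++ v :: l₂))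
    {w : P} (hw : v ≤ w) : w ∉ l₁ := by
  obtain ⟨hnd, hmem, hord⟩ := hl
  intro hwmem
  obtain ⟨j, hj, hjw⟩ := List.mem_iff_getElem.1 hwmem
  have hj' : j < (l₁ ++ v :: l₂).length := by simp; omega
  have heq : (l₁ ++ v :: l₂)[j]'hj' = w := by
    rw [List.getElem_append_left hj]
    exact hjw
  have hlen : l₁.length < (l₁ ++ v :: l₂).length := by simp
  have hv : (l₁ ++ v :: l₂)[l₁.length]'hlen = v := by
    rw [List.getElem_append_right (le_refl l₁.length)]
    simp
  rcases lt_or_eq_of_le hw with hlt | heqv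
  · have := hord l₁.length j hlen hj' (by rw [heq, hv]; exact hlt)
    omega
  · have h2 : (l₁ ++ v :: l₂)[j]'hj' = (l₁ ++ v :: l₂)[l₁.length]'hlen := by
      rw [heq, hv, heqv]
    have := (hnd.getElem_inj_iff).1 h2
    omega

lemma atog_step {C : ℝ} (hC : 0 < C) {g : P → ℝ} (hg : ∀ x, 0 < g x)
    {l₁ l₂ : List P} {v : P} (hl : IsLinearExtension (l₁ ++ v :: l₂)) :
    atog C v (fun x => if x ∈ l₁ then nablaMap (thetaMap C (deltaInvMap g)) x else g x)
      = fun x => if x ∈ l₁ ++ [v] then nablaMap (thetaMap C (deltaInvMap g)) x else g x := by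
  set t : P → ℝ := nablaMap (thetaMap C (deltaInvMap g)) with ht
  set h : P → ℝ := fun x => if x ∈ l₁ then t x else g x with hh
  have hvl₁ : v ∉ l₁ := linext_not_mem_right hl le_rfl
  have hlow : ∀ w, w < v → w ∈ l₁ := fun w hw => linext_mem_left hl hw
  have hupp : ∀ w, v ≤ w → w ∉ l₁ := fun w hw => linext_not_mem_right hl hw
  have hD : ∀ y, 0 < deltaInvMap g y := deltaInvMap_pos hg
  have hL : ∀ y, 0 < lowSum (thetaMap C (deltaInvMap g)) y := lowSum_theta_pos hC hg
  have hty : ∀ y, t y * lowSum (thetaMap C (deltaInvMap g)) y = thetaMap C (deltaInvMap g) y := by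
    intro y
    rw [ht]
    simp only [nablaMap]
    exact div_mul_cancel₀ _ (hL y).ne'
  have claimA : ∀ y, y < v → dSum h y = C / deltaInvMap g y := by
    intro y
    induction y using IsWellFounded.induction (· < · : P → P → Prop) with
    | _ y IH =>
      intro hyv
      rw [dSum_rec]
      have hyl₁ : y ∈ l₁ := hlow y hyv
      have hhy : h y = t y := by rw [hh]; simp [hyl₁]
      have hsum : ∑ z ∈ univ.filter (fun z => z ⋖ y), dSum h z
          = ∑ z ∈ univ.filter (fun z => z ⋖ y), thetaMap C (deltaInvMap g) z := by
        refine Finset.sum_congr rfl fun z hz => ?_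
        simp only [Finset.mem_filter] at hz
        rw [IH z hz.2.lt (hz.2.lt.trans hyv)]
        rfl
      rw [hsum, hhy]
      have hrw : (if IsMin y then t y else 0)
          + (∑ z ∈ univ.filter (fun z => z ⋖ y), thetaMap C (deltaInvMap g) z) * t y
          = t y * lowSum (thetaMap C (deltaInvMap g)) y := by
        rw [lowSum]
        split_ifs <;> ring
      rw [hrw, hty y]
      rfl
  have hhv : h v = g v := by rw [hh]; simp [hvl₁]
  have hDh : deltaInvMap h v = deltaInvMap g v :=
    deltaInvMap_congr fun w hw => by rw [hh]; simp [hupp w hw]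
  have hdsum : dSum h v = g v * lowSum (thetaMap C (deltaInvMap g)) v := by
    rw [dSum_rec]
    have hsum : ∑ z ∈ univ.filter (fun z => z ⋖ v), dSum h z
        = ∑ z ∈ univ.filter (fun z => z ⋖ v), thetaMap C (deltaInvMap g) z := by
      refine Finset.sum_congr rfl fun z hz => ?_
      simp only [Finset.mem_filter] at hz
      rw [claimA z hz.2.lt]
      rfl
    rw [hsum, hhv, lowSum]
    split_ifs <;> ring
  have hups : Upsilon h v * h v = dSum h v * deltaInvMap h v := by
    rw [upsilon_eq, dSum_eq, Finset.sum_mul, Finset.sum_mul]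
    exact Finset.sum_congr rfl fun x _ => upsAt_mul h v x
  have hU : Upsilon h v = lowSum (thetaMap C (deltaInvMap g)) v * deltaInvMap g v := by
    have h2 := hups
    rw [hDh, hhv, hdsum] at h2
    have h3 : Upsilon h v * g v
        = (lowSum (thetaMap C (deltaInvMap g)) v * deltaInvMap g v) * g v := by
      rw [h2]; ring
    exact mul_right_cancel₀ (hg v).ne' h3
  funext x
  by_cases hx : x = v
  · subst hx
    have h1 : atog C x h x = C / Upsilon h x := by rw [atog]; simp
    rw [h1, hU, if_pos (by simp : x ∈ l₁ ++ [x]), ht]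
    simp only [nablaMap, thetaMap]
    rw [mul_comm, ← div_div]
  · have h1 : atog C v h x = h x := by rw [atog]; simp [hx]
    rw [h1, hh]
    simp only [List.mem_append, List.mem_singleton, hx, or_false]

lemma applyATogs_aux (C : ℝ) (hC : 0 < C) (g : P → ℝ) (hg : ∀ x, 0 < g x) :
    ∀ (l₂ l₁ : List P), IsLinearExtension (l₁ ++ l₂) →
      applyATogs C l₂ (fun x => if x ∈ l₁ then nablaMap (thetaMap C (deltaInvMap g)) x else g x)
        = fun x => if x ∈ l₁ ++ l₂ then nablaMap (thetaMap C (deltaInvMap g)) x else g x := by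
  intro l₂
  induction l₂ with
  | nil =>
    intro l₁ hl
    rw [applyATogs]
    funext x
    simp
  | cons v l₂ ih =>
    intro l₁ hl
    have hfold : applyATogs C (v :: l₂)
          (fun x => if x ∈ l₁ then nablaMap (thetaMap C (deltaInvMap g)) x else g x)
        = applyATogs C l₂ (atog C v
          (fun x => if x ∈ l₁ then nablaMap (thetaMap C (deltaInvMap g)) x else g x)) := by
      rw [applyATogs, applyATogs, List.foldl_cons]
    rw [hfold, atog_step hC hg hl]
    have hl' : IsLinearExtension ((l₁ ++ [v]) ++ l₂) := by
      rw [List.append_assoc]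
      exact hl
    have := ih (l₁ ++ [v]) hl'
    rw [this]
    funext x
    simp [List.append_assoc]

end BARAux

/-- For any linear extension `(x₁,…,xₙ)` of `P`, birational antichain
rowmotion `BAR = τ_{xₙ} ∘ ⋯ ∘ τ_{x₂} ∘ τ_{x₁}` equals the composition `∇ ∘ Θ ∘ Δ⁻¹` of
the birational transfer maps, on positive labelings. -/
theorem BAR_eq_nabla_theta_deltaInv (C : ℝ) (hC : 0 < C)
    (l : List P) (hl : IsLinearExtension l)
    (g : P → ℝ) (hg : ∀ x, 0 < g x) :
    applyATogs C l g = nablaMap (thetaMap C (deltaInvMap g)) := by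
  have h := BARAux.applyATogs_aux C hC g hg l [] hl
  have hf : (fun x => if x ∈ ([] : List P) then nablaMap (thetaMap C (deltaInvMap g)) x else g x)
      = g := by
    funext x
    simp
  rw [hf] at h
  simp only [List.nil_append] at h
  rw [h]
  funext x
  simp [hl.2.1 x]
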